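/- Let A be an associative algebra, Ω¹ an A-bimodule, and d, d̄ : A → Ω¹ two derivations (satisfying the Leibniz rule). If φ ∈ A is invertible and satisfies d̄φ - (dφ)·φ = 0, then φ⁻¹ satisfies d(φ⁻¹) - (d̄(φ⁻¹))·φ⁻¹ = 0, i.e., exchanging d and d̄ in the 'Riemann equation' corresponds to replacing φ by φ⁻¹. -/

import Mathlib

/-- For derivations `d`, `d̄` from an associative algebra `A` into an
`A`-bimodule `Ω`, if an invertible `φ` satisfies the Riemann equation
`d̄φ - (dφ)·φ = 0`, then `φ⁻¹` satisfies `d(φ⁻¹) - (d̄(φ⁻¹))·φ⁻¹ = 0`. -/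
theorem stmt_0 {A Ω : Type*} [Ring A] [AddCommGroup Ω]
    [Module A Ω] [Module Aᵐᵒᵖ Ω] [SMulCommClass A Aᵐᵒᵖ Ω]
    (d dbar : A → Ω)
    (hd_add : ∀ a b : A, d (a + b) = d a + d b)
    (hdbar_add : ∀ a b : A, dbar (a + b) = dbar a + dbar b)
    (hd_leib : ∀ a b : A, d (a * b) = MulOpposite.op b • d a + a • d b)
    (hdbar_leib : ∀ a b : A, dbar (a * b) = MulOpposite.op b • dbar a + a • dbar b)
    (φ ψ : A) (hinv₁ : φ * ψ = 1) (hinv₂ : ψ * φ = 1)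
    (hRiemann : dbar φ - MulOpposite.op φ • d φ = 0) :
    d ψ - MulOpposite.op ψ • dbar ψ = 0 := by
  have hd1 : d 1 = 0 := by
    have h := hd_leib 1 1
    simp only [one_mul, MulOpposite.op_one, one_smul] at h
    exact (right_eq_add.mp h)
  have hdbar1 : dbar 1 = 0 := by
    have h := hdbar_leib 1 1
    simp only [one_mul, MulOpposite.op_one, one_smul] at h
    exact (right_eq_add.mp h)
  have hφ : dbar φ = MulOpposite.op φ • d φ := by rwa [sub_eq_zero] at hRiemann
  have h1 : MulOpposite.op ψ • d φ + φ • d ψ = 0 := by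
    rw [← hd_leib, hinv₁, hd1]
  have h2 : MulOpposite.op ψ • dbar φ + φ • dbar ψ = 0 := by
    rw [← hdbar_leib, hinv₁, hdbar1]
  have hdψ : d ψ = ψ • (-(MulOpposite.op ψ • d φ)) := by
    have h3 : φ • d ψ = -(MulOpposite.op ψ • d φ) := eq_neg_of_add_eq_zero_right h1
    calc d ψ = (ψ * φ) • d ψ := by rw [hinv₂, one_smul]
    _ = ψ • (φ • d ψ) := by rw [mul_smul]
    _ = ψ • (-(MulOpposite.op ψ • d φ)) := by rw [h3]
  have hdbarψ : dbar ψ = ψ • (-(MulOpposite.op ψ • dbar φ)) := by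
    have h3 : φ • dbar ψ = -(MulOpposite.op ψ • dbar φ) := eq_neg_of_add_eq_zero_right h2
    calc dbar ψ = (ψ * φ) • dbar ψ := by rw [hinv₂, one_smul]
    _ = ψ • (φ • dbar ψ) := by rw [mul_smul]
    _ = ψ • (-(MulOpposite.op ψ • dbar φ)) := by rw [h3]
  rw [hdψ, hdbarψ, hφ, smul_smul, ← MulOpposite.op_mul, hinv₁,
    MulOpposite.op_one, one_smul, ← smul_comm ψ (MulOpposite.op ψ)]
  simp [smul_neg]
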